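/- Let V be a vector space over 𝔽₂ of finite positive dimension endowed with a symplectic form B. Let S be a spanning set of V such that G(S) is connected. Then there exists a subset J ⊆ S such that J is linearly independent, G(J) is connected, and J is a basis of V; moreover, any subset J of S maximal with respect to inclusion among linearly independent subsets I of S with G(I) connected is a basis of V. -/

import Mathlib

open Module

/-- The transvection with direction `α`, as a linear automorphism of `V`
(over `𝔽₂`, for an alternating form `B` it is an involution). -/
def transvection {V : Type} [AddCommGroup V] [Module (ZMod 2) V]
    (B : LinearMap.BilinForm (ZMod 2) V) (hB : ∀ v, B v v = 0) (α : V) :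
    V ≃ₗ[ZMod 2] V :=
  letI f : V →ₗ[ZMod 2] V :=
    { toFun := fun β => β + B β α • α
      map_add' := fun β γ => by
        simp only [map_add, LinearMap.add_apply, add_smul]
        abel
      map_smul' := fun c β => by
        simp only [map_smul, LinearMap.smul_apply, smul_eq_mul, RingHom.id_apply, smul_add,
          smul_smul] }
  haveI key : ∀ β, f (f β) = β := by
    intro β
    show (β + B β α • α) + B (β + B β α • α) α • α = β
    have h1 : B (β + B β α • α) α = B β α := by
      simp [map_add, hB α, LinearMap.add_apply, LinearMap.smul_apply]
    rw [h1]
    have h2 : B β α • α + B β α • α = (0 : V) := by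
      rw [← add_smul]
      have : B β α + B β α = 0 := by
        have : (2 : ZMod 2) = 0 := by decide
        calc B β α + B β α = 2 * B β α := by ring
        _ = 0 := by rw [this]; ring
      rw [this, zero_smul]
    rw [add_assoc, h2, add_zero]
  LinearEquiv.ofLinear f f (by ext β; exact key β) (by ext β; exact key β)

/-- the subgroup `Tv(S)` generated by the transvections with directions in `S`. -/
def Tv {V : Type} [AddCommGroup V] [Module (ZMod 2) V]
    (B : LinearMap.BilinForm (ZMod 2) V) (hB : ∀ v, B v v = 0) (S : Set V) :
    Subgroup (V ≃ₗ[ZMod 2] V) :=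
  Subgroup.closure ((fun α => transvection B hB α) '' S)

/-- The graph `G(S)`: vertex set `S`, with `α, β` adjacent iff `B α β = 1`. -/
def graphOf {V : Type} [AddCommGroup V] [Module (ZMod 2) V]
    (B : LinearMap.BilinForm (ZMod 2) V) (hB : ∀ v, B v v = 0) (S : Set V) :
    SimpleGraph S where
  Adj a b := B a b = 1
  symm := by
    constructor
    intro a b hab
    beta_reduce at hab ⊢
    have h := hB ((a : V) + b)
    simp only [map_add, LinearMap.add_apply, hB] at h
    -- h : B b a + B a b = 0 (after simp of diagonal terms)
    have h' : B (b : V) a + B (a : V) b = 0 := by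
      simpa [hB] using h
    have : B (b : V) a = B (a : V) b := by
      have := eq_neg_of_add_eq_zero_left h'
      rwa [CharTwo.neg_eq] at this
    rw [this]; exact hab
  loopless := by
    constructor
    intro a h
    beta_reduce at h
    rw [hB] at h
    exact zero_ne_one h

/-- number of connected components of a graph. -/
noncomputable def numComponents {α : Type} (G : SimpleGraph α) : ℕ :=
  Nat.card G.ConnectedComponent

/-- A cut-vertex: a vertex whose deletion increases the number of components. -/
noncomputable def IsCutVertex {α : Type} (G : SimpleGraph α) (u : α) : Prop :=
  numComponents G < numComponents (G.induce {v | v ≠ u})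

/-- A block: a maximal (vertex set of a) connected induced subgraph having no cut-vertex. -/
noncomputable def IsBlock {α : Type} (G : SimpleGraph α) (A : Set α) : Prop :=
  ((G.induce A).Connected ∧ ∀ u, ¬ IsCutVertex (G.induce A) u) ∧
    ∀ A' : Set α, A ⊆ A' → ((G.induce A').Connected ∧ ∀ u, ¬ IsCutVertex (G.induce A') u) →
      A' = A

/-- A block graph: a connected graph all of whose blocks are complete. -/
noncomputable def IsBlockGraph {α : Type} (G : SimpleGraph α) : Prop :=
  G.Connected ∧ ∀ A : Set α, IsBlock G A → A.Pairwise G.Adj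

/-- Claw-free: no induced subgraph isomorphic to `K_{1,3}`. -/
def ClawFree {α : Type} (G : SimpleGraph α) : Prop :=
  IsEmpty (completeBipartiteGraph (Fin 1) (Fin 3) ↪g G)

/-- `G` is (isomorphic to) the line graph of a tree. -/
def IsLineGraphOfTree {α : Type} (G : SimpleGraph α) : Prop :=
  ∃ (W : Type) (T : SimpleGraph W), T.IsTree ∧ Nonempty (G ≃g T.lineGraph)

/-- A path graph: a tree in which every vertex has degree at most two. -/
def IsPathGraph {α : Type} (G : SimpleGraph α) : Prop :=
  G.IsTree ∧ ∀ v a b c : α, G.Adj v a → G.Adj v b → G.Adj v c → a = b ∨ a = c ∨ b = c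

/-- The relation `𝓘₀` on linearly independent subsets of `V`. -/
def IRelZero {V : Type} [AddCommGroup V] [Module (ZMod 2) V]
    (B : LinearMap.BilinForm (ZMod 2) V) (hB : ∀ v, B v v = 0) (S S' : Set V) : Prop :=
  LinearIndependent (ZMod 2) ((↑) : S → V) ∧ LinearIndependent (ZMod 2) ((↑) : S' → V) ∧
    ∃ α ∈ S, ∃ β ∈ S, S' = insert (transvection B hB α β) (S \ {β})

/-- The equivalence relation `𝓘` generated by `𝓘₀`. -/
def IRel {V : Type} [AddCommGroup V] [Module (ZMod 2) V]
    (B : LinearMap.BilinForm (ZMod 2) V) (hB : ∀ v, B v v = 0) : Set V → Set V → Prop :=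
  Relation.EqvGen (IRelZero B hB)


section Aux

variable {V : Type} [AddCommGroup V] [Module (ZMod 2) V]
  (B : LinearMap.BilinForm (ZMod 2) V)

lemma bsymm (hB : ∀ v, B v v = 0) (a b : V) (h : B a b = 1) : B b a = 1 := by
  have h0 := hB (a + b)
  simp only [map_add, LinearMap.add_apply, hB] at h0
  have h' : B b a + B a b = 0 := by simpa [hB] using h0
  have : B b a = B a b := by
    have := eq_neg_of_add_eq_zero_left h'
    rwa [CharTwo.neg_eq] at this
  rw [this]; exact h

lemma exists_adj_of_span (J : Set V) (v u : V) (hu : u ∈ Submodule.span (ZMod 2) J)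
    (h1 : B v u = 1) : ∃ j ∈ J, B v j = 1 := by
  by_contra hcon
  push_neg at hcon
  have hall : ∀ j ∈ J, B v j = 0 := by
    intro j hj
    have h2 := hcon j hj
    have : ∀ x : ZMod 2, x ≠ 1 → x = 0 := by decide
    exact this _ h2
  have hle : J ⊆ (LinearMap.ker (B v) : Submodule (ZMod 2) V) := by
    intro j hj; exact hall j hj
  have : u ∈ LinearMap.ker (B v) := (Submodule.span_le.mpr hle) hu
  rw [LinearMap.mem_ker] at this
  rw [this] at h1
  exact absurd h1 (by decide)

lemma conn_insert (hB : ∀ v, B v v = 0) (J : Set V) (v j : V) (hc : (graphOf B hB J).Connected)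
    (hj : j ∈ J) (hadj : B v j = 1) : (graphOf B hB (insert v J)).Connected := by
  classical
  set jv : ↥(insert v J) := ⟨j, Set.mem_insert_of_mem _ hj⟩ with hjv
  let hom : graphOf B hB J →g graphOf B hB (insert v J) :=
    { toFun := fun x => ⟨x.1, Set.mem_insert_of_mem _ x.2⟩
      map_rel' := fun {a b} h => h }
  have key : ∀ a : ↥(insert v J), (graphOf B hB (insert v J)).Reachable a jv := by
    intro a
    rcases a.2 with hav | haJ
    · refine SimpleGraph.Adj.reachable ?_
      show B (a : V) j = 1
      rw [hav]; exact hadj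
    · have hr := hc.preconnected ⟨a.1, haJ⟩ ⟨j, hj⟩
      have := hr.map hom
      have ha : hom ⟨a.1, haJ⟩ = a := rfl
      have hb : hom ⟨j, hj⟩ = jv := rfl
      rwa [ha, hb] at this
  constructor
  intro a b
  exact (key a).trans (key b).symm

lemma exists_boundary (hB : ∀ v, B v v = 0) (S J : Set V) :
    ∀ {a b : ↥S}, (graphOf B hB S).Walk a b →
      (a : V) ∈ Submodule.span (ZMod 2) J → (b : V) ∉ Submodule.span (ZMod 2) J →
      ∃ v : ↥S, (v : V) ∉ Submodule.span (ZMod 2) J ∧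
        ∃ u : V, u ∈ Submodule.span (ZMod 2) J ∧ B u v = 1 := by
  intro a b w
  induction w with
  | nil => intro ha hb; exact absurd ha hb
  | @cons x y z h w ih =>
    intro ha hb
    by_cases hy : (y : V) ∈ Submodule.span (ZMod 2) J
    · exact ih hy hb
    · exact ⟨y, hy, x, ha, h⟩

lemma maximal_spans (hB : ∀ v, B v v = 0) (S : Set V) (hconn : (graphOf B hB S).Connected)
    (hspan : Submodule.span (ZMod 2) S = ⊤)
    (J : Set V) (hJS : J ⊆ S) (hind : LinearIndependent (ZMod 2) ((↑) : J → V))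
    (hcJ : (graphOf B hB J).Connected)
    (hmax : ∀ I : Set V, I ⊆ S → LinearIndependent (ZMod 2) ((↑) : I → V) →
      (graphOf B hB I).Connected → J ⊆ I → I = J) :
    Submodule.span (ZMod 2) J = ⊤ := by
  haveI : Fact (Nat.Prime 2) := ⟨by norm_num⟩
  by_contra hne
  have hex : ∃ s ∈ S, s ∉ Submodule.span (ZMod 2) J := by
    by_contra hc
    push_neg at hc
    have : Submodule.span (ZMod 2) S ≤ Submodule.span (ZMod 2) J :=
      Submodule.span_le.mpr hc
    rw [hspan] at this
    exact hne (top_le_iff.mp this)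
  obtain ⟨s, hsS, hs⟩ := hex
  obtain ⟨j0⟩ := hcJ.nonempty
  have hj0S : (j0 : V) ∈ S := hJS j0.2
  have hj0span : (j0 : V) ∈ Submodule.span (ZMod 2) J := Submodule.subset_span j0.2
  obtain ⟨w⟩ := hconn.preconnected ⟨j0, hj0S⟩ ⟨s, hsS⟩
  obtain ⟨v, hv, u, hu, huv⟩ := exists_boundary B hB S J w hj0span hs
  have hvu : B (v : V) u = 1 := bsymm B hB u v huv
  obtain ⟨j, hjJ, hvj⟩ := exists_adj_of_span B J (v : V) u hu hvu
  have hJ' : insert (v : V) J ⊆ S := Set.insert_subset v.2 hJS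
  have hind' : LinearIndependent (ZMod 2) ((↑) : ↥(insert (v : V) J) → V) :=
    (LinearIndepOn.id_insert (linearIndependent_set_coe_iff (v := id).mp hind) hv).linearIndependent
  have hconn' : (graphOf B hB (insert (v : V) J)).Connected :=
    conn_insert B hB J v j hcJ hjJ hvj
  have := hmax _ hJ' hind' hconn' (Set.subset_insert _ _)
  have hvJ : (v : V) ∈ J := this ▸ Set.mem_insert _ _
  exact hv (Submodule.subset_span hvJ)

end Aux

/-- if `S` spans `V` and `G(S)` is connected, then there is a subset `J ⊆ S`
which is linearly independent, has `G(J)` connected and is a basis of `V`; moreover any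
`J ⊆ S` maximal under inclusion among the linearly independent subsets `I ⊆ S` with `G(I)`
connected is a basis of `V`. -/
theorem stmt17 {V : Type} [AddCommGroup V] [Module (ZMod 2) V] [FiniteDimensional (ZMod 2) V]
    (hdim : 0 < Module.finrank (ZMod 2) V)
    (B : LinearMap.BilinForm (ZMod 2) V) (hB : ∀ v, B v v = 0)
    (S : Set V) (hspan : Submodule.span (ZMod 2) S = ⊤)
    (hconn : (graphOf B hB S).Connected) :
    (∃ J : Set V, J ⊆ S ∧ LinearIndependent (ZMod 2) ((↑) : J → V) ∧
        (graphOf B hB J).Connected ∧ Submodule.span (ZMod 2) J = ⊤) ∧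
      ∀ J : Set V, J ⊆ S → LinearIndependent (ZMod 2) ((↑) : J → V) →
        (graphOf B hB J).Connected →
        (∀ I : Set V, I ⊆ S → LinearIndependent (ZMod 2) ((↑) : I → V) →
          (graphOf B hB I).Connected → J ⊆ I → I = J) →
        LinearIndependent (ZMod 2) ((↑) : J → V) ∧ Submodule.span (ZMod 2) J = ⊤ := by
  haveI : Fact (Nat.Prime 2) := ⟨by norm_num⟩
  haveI : Finite V := Module.finite_of_finite (ZMod 2)
  classical
  have part2 : ∀ J : Set V, J ⊆ S → LinearIndependent (ZMod 2) ((↑) : J → V) →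
      (graphOf B hB J).Connected →
      (∀ I : Set V, I ⊆ S → LinearIndependent (ZMod 2) ((↑) : I → V) →
        (graphOf B hB I).Connected → J ⊆ I → I = J) →
      LinearIndependent (ZMod 2) ((↑) : J → V) ∧ Submodule.span (ZMod 2) J = ⊤ := by
    intro J hJS hind hcJ hmax
    exact ⟨hind, maximal_spans B hB S hconn hspan J hJS hind hcJ hmax⟩
  refine ⟨?_, part2⟩
  -- find a nonzero element of S
  have hex0 : ∃ s ∈ S, s ≠ (0 : V) := by
    by_contra hc
    push_neg at hc
    have hsub : S ⊆ ({0} : Set V) := fun x hx => hc x hx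
    have : Submodule.span (ZMod 2) S ≤ Submodule.span (ZMod 2) ({0} : Set V) :=
      Submodule.span_mono hsub
    rw [hspan, Submodule.span_zero_singleton] at this
    have hbot : (⊤ : Submodule (ZMod 2) V) = ⊥ := le_bot_iff.mp this
    have : Module.finrank (ZMod 2) V = 0 := by
      rw [← finrank_top (ZMod 2) V, hbot, finrank_bot]
    omega
  obtain ⟨s0, hs0S, hs0⟩ := hex0
  -- the family of candidate sets
  set F : Set (Set V) := {I | I ⊆ S ∧ LinearIndependent (ZMod 2) ((↑) : I → V) ∧
    (graphOf B hB I).Connected} with hF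
  have hFfin : F.Finite := Set.toFinite F
  have hs0F : ({s0} : Set V) ∈ F := by
    refine ⟨Set.singleton_subset_iff.mpr hs0S, ?_, ?_⟩
    · exact (LinearIndepOn.singleton (R := ZMod 2) (v := id) hs0).linearIndependent
    · constructor
      intro a b
      have : a = b := Subtype.ext (by
        have ha := a.2; have hb := b.2
        simp only [Set.mem_singleton_iff] at ha hb
        rw [ha, hb])
      rw [this]
  have hFne : F.Nonempty := ⟨_, hs0F⟩
  obtain ⟨J, hJF, hJmax⟩ := hFfin.exists_maximalFor id F hFne
  obtain ⟨hJS, hind, hcJ⟩ := hJF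
  have hmax : ∀ I : Set V, I ⊆ S → LinearIndependent (ZMod 2) ((↑) : I → V) →
      (graphOf B hB I).Connected → J ⊆ I → I = J := by
    intro I hIS hindI hcI hJI
    exact Set.Subset.antisymm (hJmax ⟨hIS, hindI, hcI⟩ hJI) hJI
  exact ⟨J, hJS, hind, hcJ, maximal_spans B hB S hconn hspan J hJS hind hcJ hmax⟩
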